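/- Let d ≥ 1 be an integer, b > 0, and let p ≥ 1 be a real number. Let P be the uniform probability measure on the ℓ₁-ball {w ∈ ℝ^d : ∑_{i=1}^d |w_i| ≤ b}. Then there exist a measurable function h : ℝ^d → {0,1} and points x, x' ∈ ℝ^d with (∑_{i=1}^d |x'_i − x_i|^p)^{1/p} ≤ 2b/d such that P{Δ : h(x+Δ) = 0} > P{Δ : h(x+Δ) = 1} but P{Δ : h(x'+Δ) = 1} ≥ P{Δ : h(x'+Δ) = 0}. (Hence for uniform ℓ₁-ball smoothing no ℓ_p-radius of 2b/d can be certified for all classifiers, for any p.) -/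

import Mathlib

open MeasureTheory Real

/-- **Theorem 4 (uniform ℓ₁-ball smoothing), counterexample form.**
For the uniform distribution on the ℓ₁-ball of radius `b` (Lebesgue measure restricted
to it, normalized by its volume `2^d b^d / d!`), there is a classifier whose smoothed
prediction changes between two points at `ℓ_p`-distance at most `2b / d`. -/
theorem curse_of_dimensionality_uniform_l1_smoothing
    (d : ℕ) (hd : 1 ≤ d) (b : ℝ) (hb : 0 < b) (p : ℝ) (hp : 1 ≤ p) :
    ∃ (h : (Fin d → ℝ) → Fin 2) (x x' : Fin d → ℝ),
      Measurable h ∧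
      (∑ i, |x' i - x i| ^ p) ^ (1 / p) ≤ 2 * b / (d : ℝ) ∧
      ((ENNReal.ofReal (2 ^ d * b ^ d / (d.factorial : ℝ)))⁻¹ •
          volume.restrict {w : Fin d → ℝ | ∑ i, |w i| ≤ b})
          {Δ | h (x + Δ) = 1} <
        ((ENNReal.ofReal (2 ^ d * b ^ d / (d.factorial : ℝ)))⁻¹ •
          volume.restrict {w : Fin d → ℝ | ∑ i, |w i| ≤ b})
          {Δ | h (x + Δ) = 0} ∧
      ((ENNReal.ofReal (2 ^ d * b ^ d / (d.factorial : ℝ)))⁻¹ •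
          volume.restrict {w : Fin d → ℝ | ∑ i, |w i| ≤ b})
          {Δ | h (x' + Δ) = 0} ≤
        ((ENNReal.ofReal (2 ^ d * b ^ d / (d.factorial : ℝ)))⁻¹ •
          volume.restrict {w : Fin d → ℝ | ∑ i, |w i| ≤ b})
          {Δ | h (x' + Δ) = 1} := by
  classical
  have hd0 : (0:ℝ) < (d:ℝ) := by exact_mod_cast Nat.lt_of_lt_of_le Nat.zero_lt_one hd
  set t : ℝ := b / d with ht_def
  have ht : 0 < t := div_pos hb hd0
  set i₀ : Fin d := ⟨0, hd⟩ with hi₀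
  set S : Set (Fin d → ℝ) := {w : Fin d → ℝ | ∑ i, |w i| ≤ b} with hS_def
  set c : ENNReal := (ENNReal.ofReal (2 ^ d * b ^ d / (d.factorial : ℝ)))⁻¹ with hc_def
  -- facts about the normalizing constant
  have hV : (0:ℝ) < 2 ^ d * b ^ d / (d.factorial : ℝ) := by positivity
  have hc0 : c ≠ 0 := ENNReal.inv_ne_zero.2 ENNReal.ofReal_ne_top
  have hcT : c ≠ ⊤ := ENNReal.inv_ne_top.2 (ENNReal.ofReal_pos.2 hV).ne'
  -- the classifier and the two points
  refine ⟨fun y => if t ≤ y i₀ then 1 else 0, 0,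
    (fun i => if i = i₀ then 2 * t else 0), ?_, ?_, ?_, ?_⟩
  · -- measurability
    exact Measurable.ite (measurableSet_le measurable_const (measurable_pi_apply i₀))
      measurable_const measurable_const
  · -- distance bound
    have hp0 : p ≠ 0 := by positivity
    have hsum : (∑ i, |(if i = i₀ then 2 * t else 0) - (0 : Fin d → ℝ) i| ^ p)
        = (2 * t) ^ p := by
      rw [Finset.sum_eq_single i₀]
      · simp [abs_of_nonneg (by linarith : (0:ℝ) ≤ 2 * t)]
      · intro i _ hi
        simp [hi, Real.zero_rpow hp0]
      · simp
    rw [hsum, one_div, Real.rpow_rpow_inv (by linarith) hp0]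
    rw [ht_def]
    rw [mul_div_assoc]
  all_goals {
    -- common measure-theoretic setup
    have hSneg : -S = S := by
      ext w
      simp only [Set.mem_neg, hS_def, Set.mem_setOf_eq, Pi.neg_apply, abs_neg]
    have hmeas_ge : ∀ u : ℝ, MeasurableSet {Δ : Fin d → ℝ | u ≤ Δ i₀} :=
      fun u => measurableSet_le measurable_const (measurable_pi_apply i₀)
    have hmeas_lt : ∀ u : ℝ, MeasurableSet {Δ : Fin d → ℝ | Δ i₀ < u} :=
      fun u => measurableSet_lt (measurable_pi_apply i₀) measurable_const
    -- symmetry of the ball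
    have hsymm : ∀ u : ℝ, volume ({Δ : Fin d → ℝ | u ≤ Δ i₀} ∩ S)
        = volume ({Δ : Fin d → ℝ | Δ i₀ ≤ -u} ∩ S) := by
      intro u
      have : -({Δ : Fin d → ℝ | u ≤ Δ i₀} ∩ S) = {Δ : Fin d → ℝ | Δ i₀ ≤ -u} ∩ S := by
        rw [Set.inter_neg, hSneg]
        ext w
        simp only [Set.mem_inter_iff, Set.mem_neg, Set.mem_setOf_eq, Pi.neg_apply,
          le_neg]
      rw [← this, Measure.measure_neg]
    have hsymm' : ∀ u : ℝ, volume ({Δ : Fin d → ℝ | Δ i₀ < u} ∩ S)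
        = volume ({Δ : Fin d → ℝ | -u < Δ i₀} ∩ S) := by
      intro u
      have : -({Δ : Fin d → ℝ | Δ i₀ < u} ∩ S) = {Δ : Fin d → ℝ | -u < Δ i₀} ∩ S := by
        rw [Set.inter_neg, hSneg]
        ext w
        simp only [Set.mem_inter_iff, Set.mem_neg, Set.mem_setOf_eq, Pi.neg_apply,
          neg_lt]
      rw [← this, Measure.measure_neg]
    -- finiteness: S is contained in a box
    have hS_box : S ⊆ Set.pi Set.univ (fun _ : Fin d => Set.Icc (-b) b) := by
      intro w hw
      intro i _
      have h1 : |w i| ≤ ∑ j, |w j| :=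
        Finset.single_le_sum (fun j _ => abs_nonneg (w j)) (Finset.mem_univ i)
      have := le_trans h1 hw
      exact abs_le.1 this
    have hSfin : volume S < ⊤ := by
      refine lt_of_le_of_lt (measure_mono hS_box) ?_
      rw [volume_pi_pi]
      simp only [Real.volume_Icc]
      rw [Finset.prod_const, Finset.card_univ, Fintype.card_fin]
      exact ENNReal.pow_lt_top ENNReal.ofReal_lt_top
    -- the small box inside the ball
    set U : Set (Fin d → ℝ) := Set.pi Set.univ (fun _ : Fin d => Set.Ioo (-t) t)
      with hU_def
    have hU_meas : MeasurableSet U := MeasurableSet.univ_pi (fun _ => measurableSet_Ioo)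
    have hU_sub_S : U ⊆ S := by
      intro w hw
      have : ∀ i : Fin d, |w i| ≤ t := by
        intro i
        have := hw i (Set.mem_univ i)
        exact abs_le.2 ⟨(this.1).le, (this.2).le⟩
      calc ∑ i, |w i| ≤ ∑ _i : Fin d, t := Finset.sum_le_sum (fun i _ => this i)
        _ = d * t := by rw [Finset.sum_const, Finset.card_univ, Fintype.card_fin,
              nsmul_eq_mul]
        _ = b := by rw [ht_def, mul_div_cancel₀ _ hd0.ne']
    have hU_pos : 0 < volume U := by
      rw [hU_def, volume_pi_pi]
      simp only [Real.volume_Ioo]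
      rw [Finset.prod_const, Finset.card_univ, Fintype.card_fin]
      exact ENNReal.pow_pos (ENNReal.ofReal_pos.2 (by linarith)) d
    have key_lt : volume ({Δ : Fin d → ℝ | t ≤ Δ i₀} ∩ S)
        < volume ({Δ : Fin d → ℝ | Δ i₀ < t} ∩ S) := by
      rw [hsymm t]
      have hfin : volume ({Δ : Fin d → ℝ | Δ i₀ ≤ -t} ∩ S) ≠ ⊤ :=
        (lt_of_le_of_lt (measure_mono Set.inter_subset_right) hSfin).ne
      have hdisj : Disjoint ({Δ : Fin d → ℝ | Δ i₀ ≤ -t} ∩ S) U := by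
        refine Set.disjoint_left.2 ?_
        intro w hw hwU
        have h1 : w i₀ ≤ -t := hw.1
        have h2 := (hwU i₀ (Set.mem_univ i₀)).1
        linarith
      have hsub : ({Δ : Fin d → ℝ | Δ i₀ ≤ -t} ∩ S) ∪ U
          ⊆ {Δ : Fin d → ℝ | Δ i₀ < t} ∩ S := by
        rintro w (hw | hw)
        · have h1 : w i₀ ≤ -t := hw.1
          exact ⟨show w i₀ < t by linarith, hw.2⟩
        · have h1 : w i₀ < t := (hw i₀ (Set.mem_univ i₀)).2
          exact ⟨h1, hU_sub_S hw⟩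
      calc volume ({Δ : Fin d → ℝ | Δ i₀ ≤ -t} ∩ S)
          < volume ({Δ : Fin d → ℝ | Δ i₀ ≤ -t} ∩ S) + volume U :=
            ENNReal.lt_add_right hfin hU_pos.ne'
        _ = volume (({Δ : Fin d → ℝ | Δ i₀ ≤ -t} ∩ S) ∪ U) :=
            (measure_union hdisj hU_meas).symm
        _ ≤ volume ({Δ : Fin d → ℝ | Δ i₀ < t} ∩ S) := measure_mono hsub
    have key_le : volume ({Δ : Fin d → ℝ | Δ i₀ < -t} ∩ S)
        ≤ volume ({Δ : Fin d → ℝ | -t ≤ Δ i₀} ∩ S) := by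
      rw [hsymm' (-t)]
      refine measure_mono (Set.inter_subset_inter_left _ ?_)
      intro w hw
      simp only [Set.mem_setOf_eq] at hw ⊢
      linarith
    -- identify the event sets
    have set_x1 : {Δ : Fin d → ℝ |
        (fun y => if t ≤ y i₀ then (1 : Fin 2) else 0) (0 + Δ) = 1}
        = {Δ : Fin d → ℝ | t ≤ Δ i₀} := by
      ext Δ
      simp only [Set.mem_setOf_eq, zero_add]
      split_ifs with hif <;> simp [hif]
    have set_x0 : {Δ : Fin d → ℝ |
        (fun y => if t ≤ y i₀ then (1 : Fin 2) else 0) (0 + Δ) = 0}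
        = {Δ : Fin d → ℝ | Δ i₀ < t} := by
      ext Δ
      simp only [Set.mem_setOf_eq, zero_add]
      split_ifs with hif <;> simp [hif, not_le, lt_iff_not_ge]
    have hx'app : ∀ Δ : Fin d → ℝ,
        ((fun i => if i = i₀ then 2 * t else 0) + Δ) i₀ = 2 * t + Δ i₀ := by
      intro Δ; simp
    have set_x'1 : {Δ : Fin d → ℝ |
        (fun y => if t ≤ y i₀ then (1 : Fin 2) else 0)
          ((fun i => if i = i₀ then 2 * t else 0) + Δ) = 1}
        = {Δ : Fin d → ℝ | -t ≤ Δ i₀} := by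
      ext Δ
      simp only [Set.mem_setOf_eq, hx'app Δ]
      constructor
      · intro hh
        by_contra hc'
        push_neg at hc'
        rw [if_neg (not_le.2 (by linarith))] at hh
        exact absurd hh (by decide)
      · intro hh
        rw [if_pos (by linarith)]
    have set_x'0 : {Δ : Fin d → ℝ |
        (fun y => if t ≤ y i₀ then (1 : Fin 2) else 0)
          ((fun i => if i = i₀ then 2 * t else 0) + Δ) = 0}
        = {Δ : Fin d → ℝ | Δ i₀ < -t} := by
      ext Δ
      simp only [Set.mem_setOf_eq, hx'app Δ]
      constructor
      · intro hh
        by_contra hc'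
        push_neg at hc'
        rw [if_pos (by linarith)] at hh
        exact absurd hh (by decide)
      · intro hh
        rw [if_neg (not_le.2 (by linarith))]
    -- finish
    simp only [set_x1, set_x0, set_x'1, set_x'0, Measure.smul_apply, smul_eq_mul,
      Measure.restrict_apply (hmeas_ge t), Measure.restrict_apply (hmeas_lt t),
      Measure.restrict_apply (hmeas_ge (-t)), Measure.restrict_apply (hmeas_lt (-t))]
    first
      | exact (ENNReal.mul_lt_mul_iff_right hc0 hcT).2 key_lt
      | exact mul_le_mul_right key_le c
  }
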